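/- arXiv:1710.07681 — 2 statements merged into one kernel-verified Lean document; each statement's English description precedes it below -/
import Mathlib

section
/- If x' lies in the closure of the orbit of x under the shift, then spec(H_{x'}) ⊆ spec(H_x), for a strongly pattern equivariant family of Schrödinger operators. Consequently, if the subshift (X, α) is minimal, then spec(H_x) is the same for all x ∈ X. -/
open scoped BigOperators ComplexConjugate ENNReal NNReal

noncomputable section

/-- The Hilbert space `ℓ²(ℤ)`. -/
abbrev ℓ2Z : Type := lp (fun _ : ℤ => ℂ) 2

/-- The strongly pattern equivariant function `b̃ₓ(n) = b(x_{n-r}, …, x_{n+r})`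
associated to a sliding block code `b : A^{2r+1} → ℂ`. -/
def blockEval {A : Set ℝ} (r : ℕ) (b : (Fin (2 * r + 1) → A) → ℂ)
    (x : ℤ → A) (n : ℤ) : ℂ :=
  b (fun i => x (n - r + i))

/-- The shift of a sequence by `m ∈ ℤ`. -/
def shiftBy {A : Set ℝ} (m : ℤ) (x : ℤ → A) : ℤ → A := fun n => x (n + m)

namespace SpecAux

local notation "⟪" x ", " y "⟫" => @inner ℂ _ _ x y

lemma l2_mem_shift (m : ℤ) (ψ : ℓ2Z) : Memℓp (fun n : ℤ => ψ (n + m)) 2 := by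
  apply memℓp_gen
  have h := (lp.memℓp ψ).summable (p := 2) (by norm_num)
  have := ((Equiv.addRight m).summable_iff
    (f := fun n : ℤ => ‖ψ n‖ ^ (2 : ℝ≥0∞).toReal)).2 h
  exact this

/-- Translation by `m` as a linear isometry equivalence of `ℓ²(ℤ)`. -/
def shiftL (m : ℤ) : ℓ2Z ≃ₗᵢ[ℂ] ℓ2Z where
  toFun ψ := ⟨fun n => ψ (n + m), l2_mem_shift m ψ⟩
  invFun ψ := ⟨fun n => ψ (n + -m), l2_mem_shift (-m) ψ⟩
  left_inv ψ := by
    apply lp.ext; funext n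
    show ψ (n + -m + m) = ψ n
    have h : n + -m + m = n := by omega
    rw [h]
  right_inv ψ := by
    apply lp.ext; funext n
    show ψ (n + m + -m) = ψ n
    have h : n + m + -m = n := by omega
    rw [h]
  map_add' ψ φ := by
    apply lp.ext; funext n
    show (ψ + φ) (n + m) = _
    simp only [lp.coeFn_add, Pi.add_apply]
  map_smul' c ψ := by
    apply lp.ext; funext n
    show (c • ψ) (n + m) = _
    simp only [lp.coeFn_smul, Pi.smul_apply, RingHom.id_apply]
  norm_map' ψ := by
    have h2 : 0 < (2 : ℝ≥0∞).toReal := by norm_num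
    rw [lp.norm_eq_tsum_rpow h2, lp.norm_eq_tsum_rpow h2]
    congr 1
    exact (Equiv.addRight m).tsum_eq (fun n : ℤ => ‖ψ n‖ ^ (2 : ℝ≥0∞).toReal)

@[simp] lemma shiftL_apply (m : ℤ) (ψ : ℓ2Z) (n : ℤ) :
    (shiftL m ψ) n = ψ (n + m) := rfl

@[simp] lemma shiftL_symm_apply (m : ℤ) (ψ : ℓ2Z) (n : ℤ) :
    ((shiftL m).symm ψ) n = ψ (n + -m) := rfl

section Main

variable {A : Set ℝ} (r : ℕ) (S : Finset ℕ)
  (b : ℕ → (Fin (2 * r + 1) → A) → ℂ)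
  (H : (ℤ → A) → (ℓ2Z →L[ℂ] ℓ2Z))

lemma blockEval_shift (k : ℕ) (m : ℤ) (x : ℤ → A) (n : ℤ) :
    blockEval r (b k) (shiftBy m x) n = blockEval r (b k) x (n + m) := by
  unfold blockEval shiftBy
  congr 1; funext i; congr 1; ring

variable (hS : ∀ k ∈ S, 0 < k)
variable (hH : ∀ (x : ℤ → A) (ψ : ℓ2Z) (n : ℤ),
      (H x ψ) n = ∑ k ∈ S, (blockEval r (b k) x n * ψ (n + k)
        + conj (blockEval r (b k) x (n - k)) * ψ (n - k)))

include hS hH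

/-- Covariance: `H (shiftBy m x) = shiftL m ∘ H x ∘ (shiftL m).symm`, pointwise. -/
lemma Hcov (m : ℤ) (x : ℤ → A) (ψ : ℓ2Z) :
    H (shiftBy m x) ψ = shiftL m (H x ((shiftL m).symm ψ)) := by
  apply lp.ext; funext n
  have h1 : (shiftL m (H x ((shiftL m).symm ψ))) n
      = (H x ((shiftL m).symm ψ)) (n + m) := rfl
  rw [h1, hH, hH]
  refine Finset.sum_congr rfl (fun k _ => ?_)
  rw [blockEval_shift, blockEval_shift, shiftL_symm_apply, shiftL_symm_apply]
  have e1 : n + m + (k : ℤ) + -m = n + k := by omega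
  have e2 : n + m - (k : ℤ) + -m = n - k := by omega
  have e3 : n - (k : ℤ) + m = n + m - k := by omega
  rw [e1, e2, e3]

/-- Formula for `H y` applied to a single basis vector. -/
lemma H_single (y : ℤ → A) (i : ℤ) (a : ℂ) :
    H y (lp.single 2 i a) = ∑ k ∈ S,
      ((blockEval r (b k) y (i - (k : ℤ)) * a) • lp.single 2 (i - (k : ℤ)) (1 : ℂ)
        + (conj (blockEval r (b k) y i) * a) • lp.single 2 (i + (k : ℤ)) (1 : ℂ)) := by
  apply lp.ext; funext n
  rw [hH]
  have hcoe : ∀ (g : ℕ → ℓ2Z), ((∑ k ∈ S, g k : ℓ2Z) : ∀ _ : ℤ, ℂ) n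
      = ∑ k ∈ S, (g k : ∀ _ : ℤ, ℂ) n := by
    intro g
    rw [lp.coeFn_sum]
    simp
  rw [hcoe]
  refine Finset.sum_congr rfl (fun k hk => ?_)
  have hadd : ∀ (f g : ℓ2Z), ((f + g : ℓ2Z) : ∀ _ : ℤ, ℂ) n = f n + g n := by
    intro f g; rw [lp.coeFn_add]; rfl
  have hsmul : ∀ (c : ℂ) (f : ℓ2Z), ((c • f : ℓ2Z) : ∀ _ : ℤ, ℂ) n = c * f n := by
    intro c f; rw [lp.coeFn_smul]; rfl
  rw [hadd, hsmul, hsmul]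
  have hsa : ∀ (j j' : ℤ) (c : ℂ), (lp.single 2 j c : ℓ2Z) j' = if j' = j then c else 0 := by
    intro j j' c
    by_cases h : j' = j
    · subst h; rw [lp.single_apply_self, if_pos rfl]
    · rw [lp.single_apply_ne _ _ _ h, if_neg h]
  rw [hsa, hsa, hsa, hsa]
  have hk' : 0 < (k : ℤ) := by exact_mod_cast hS k hk
  by_cases h1 : n + (k : ℤ) = i
  · have h1' : n = i - (k : ℤ) := by omega
    have h2 : ¬ (n - (k : ℤ) = i) := by omega
    have h3 : ¬ (n = i + (k : ℤ)) := by omega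
    rw [if_pos h1, if_neg h2, if_pos h1', if_neg h3]
    subst h1'
    ring
  · have h1' : ¬ (n = i - (k : ℤ)) := by omega
    rw [if_neg h1, if_neg h1']
    by_cases h2 : n - (k : ℤ) = i
    · have h2' : n = i + (k : ℤ) := by omega
      rw [if_pos h2, if_pos h2']
      have : n - (k : ℤ) = i := h2
      rw [this]
      ring
    · have h2' : ¬ (n = i + (k : ℤ)) := by omega
      rw [if_neg h2, if_neg h2']
      ring

/-- symmetry on basis vectors -/
lemma sym_single_single (y : ℤ → A) (i j : ℤ) (a c : ℂ) :
    ⟪H y (lp.single 2 i a), (lp.single 2 j c : ℓ2Z)⟫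
      = ⟪(lp.single 2 i a : ℓ2Z), H y (lp.single 2 j c)⟫ := by
  rw [lp.inner_single_right, lp.inner_single_left, hH, hH]
  have hsa : ∀ (j₀ j' : ℤ) (c₀ : ℂ), (lp.single 2 j₀ c₀ : ℓ2Z) j' = if j' = j₀ then c₀ else 0 := by
    intro j₀ j' c₀
    by_cases h : j' = j₀
    · subst h; rw [lp.single_apply_self, if_pos rfl]
    · rw [lp.single_apply_ne _ _ _ h, if_neg h]
  simp only [hsa, RCLike.inner_apply, map_sum, Finset.mul_sum, Finset.sum_mul, map_add, map_mul]
  refine Finset.sum_congr rfl (fun k hk => ?_)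
  have hk' : 0 < (k : ℤ) := by exact_mod_cast hS k hk
  by_cases h1 : j + (k : ℤ) = i
  · have h1' : i - (k : ℤ) = j := by omega
    have h2 : ¬ (j - (k : ℤ) = i) := by
      intro h; omega
    have h3 : ¬ (i + (k : ℤ) = j) := by omega
    rw [if_pos h1, if_neg h2, if_pos h1', if_neg h3]
    have harg : j = i - (k : ℤ) := by omega
    subst harg
    simp only [map_zero, mul_zero, zero_mul, add_zero, zero_add, Complex.conj_conj]
    ring
  · have h1' : ¬ (i - (k : ℤ) = j) := by omega
    rw [if_neg h1, if_neg h1']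
    by_cases h2 : j - (k : ℤ) = i
    · have h2' : i + (k : ℤ) = j := by omega
      rw [if_pos h2, if_pos h2']
      have harg : j - (k : ℤ) = i := h2
      rw [harg]
      simp only [map_zero, mul_zero, zero_mul, add_zero, zero_add, Complex.conj_conj]
      ring
    · have h2' : ¬ (i + (k : ℤ) = j) := by omega
      rw [if_neg h2, if_neg h2']
      simp

lemma sym_single (y : ℤ → A) (ψ : ℓ2Z) (j : ℤ) (c : ℂ) :
    ⟪H y ψ, (lp.single 2 j c : ℓ2Z)⟫ = ⟪ψ, H y (lp.single 2 j c)⟫ := by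
  have hψ : HasSum (fun i : ℤ => lp.single 2 i (ψ i)) ψ :=
    lp.hasSum_single (by norm_num) ψ
  have key : ⟪(lp.single 2 j c : ℓ2Z), H y ψ⟫ = ⟪H y (lp.single 2 j c), ψ⟫ := by
    have h1 : HasSum (fun i : ℤ => ((innerSL ℂ (lp.single 2 j c : ℓ2Z)).comp (H y))
        (lp.single 2 i (ψ i))) (((innerSL ℂ (lp.single 2 j c : ℓ2Z)).comp (H y)) ψ) :=
      hψ.mapL _
    have h2 : HasSum (fun i : ℤ => (innerSL ℂ (H y (lp.single 2 j c)))
        (lp.single 2 i (ψ i))) ((innerSL ℂ (H y (lp.single 2 j c))) ψ) :=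
      hψ.mapL _
    have heq : (fun i : ℤ => ((innerSL ℂ (lp.single 2 j c : ℓ2Z)).comp (H y))
        (lp.single 2 i (ψ i)))
        = fun i : ℤ => (innerSL ℂ (H y (lp.single 2 j c))) (lp.single 2 i (ψ i)) := by
      funext i
      simp only [ContinuousLinearMap.comp_apply, innerSL_apply_apply]
      calc ⟪(lp.single 2 j c : ℓ2Z), H y (lp.single 2 i (ψ i))⟫
          = conj ⟪H y (lp.single 2 i (ψ i)), (lp.single 2 j c : ℓ2Z)⟫ := by
            rw [inner_conj_symm]
        _ = conj ⟪(lp.single 2 i (ψ i) : ℓ2Z), H y (lp.single 2 j c)⟫ := by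
            rw [sym_single_single r S b H hS hH]
        _ = ⟪H y (lp.single 2 j c), (lp.single 2 i (ψ i) : ℓ2Z)⟫ := by
            rw [inner_conj_symm]
    rw [heq] at h1
    exact h1.unique h2
  calc ⟪H y ψ, (lp.single 2 j c : ℓ2Z)⟫
      = conj ⟪(lp.single 2 j c : ℓ2Z), H y ψ⟫ := by rw [inner_conj_symm]
    _ = conj ⟪H y (lp.single 2 j c), ψ⟫ := by rw [key]
    _ = ⟪ψ, H y (lp.single 2 j c)⟫ := by rw [inner_conj_symm]

lemma H_selfAdjoint (y : ℤ → A) : IsSelfAdjoint (H y) := by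
  rw [ContinuousLinearMap.isSelfAdjoint_iff_isSymmetric]
  intro ψ φ
  have hφ : HasSum (fun j : ℤ => lp.single 2 j (φ j)) φ :=
    lp.hasSum_single (by norm_num) φ
  have key : ⟪φ, H y ψ⟫ = ⟪H y φ, ψ⟫ := by
    have h1 : HasSum (fun j : ℤ => ((innerSL ℂ (H y ψ)))
        (lp.single 2 j (φ j))) ((innerSL ℂ (H y ψ)) φ) := hφ.mapL _
    have h2 : HasSum (fun j : ℤ => ((innerSL ℂ ψ).comp (H y))
        (lp.single 2 j (φ j))) (((innerSL ℂ ψ).comp (H y)) φ) := hφ.mapL _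
    have heq : (fun j : ℤ => ((innerSL ℂ (H y ψ))) (lp.single 2 j (φ j)))
        = fun j : ℤ => ((innerSL ℂ ψ).comp (H y)) (lp.single 2 j (φ j)) := by
      funext j
      simp only [ContinuousLinearMap.comp_apply, innerSL_apply_apply]
      exact sym_single r S b H hS hH y ψ j (φ j)
    rw [heq] at h1
    have := h1.unique h2
    simp only [ContinuousLinearMap.comp_apply, innerSL_apply_apply] at this
    calc ⟪φ, H y ψ⟫ = conj ⟪H y ψ, φ⟫ := by rw [inner_conj_symm]
      _ = conj ⟪ψ, H y φ⟫ := by rw [this]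
      _ = ⟪H y φ, ψ⟫ := by rw [inner_conj_symm]
  calc ⟪H y ψ, φ⟫ = conj ⟪φ, H y ψ⟫ := by rw [inner_conj_symm]
    _ = conj ⟪H y φ, ψ⟫ := by rw [key]
    _ = ⟪ψ, H y φ⟫ := by rw [inner_conj_symm]

omit hS hH

variable (hb : ∀ k, Continuous (b k))

include hb

lemma cont_blockEval (k : ℕ) (j : ℤ) :
    Continuous (fun y : ℤ → A => blockEval r (b k) y j) := by
  unfold blockEval
  exact (hb k).comp (continuous_pi (fun i => continuous_apply _))

include hS hH

/-- continuity in `y` of `H y` applied to a fixed finitely supported vector. -/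
lemma cont_H_apply (F : Finset ℤ) (v : ℤ → ℂ) :
    Continuous (fun y : ℤ → A => H y (∑ i ∈ F, lp.single 2 i (v i))) := by
  have : (fun y : ℤ → A => H y (∑ i ∈ F, lp.single 2 i (v i)))
      = fun y => ∑ i ∈ F, H y (lp.single 2 i (v i)) := by
    funext y; rw [map_sum]
  rw [this]
  refine continuous_finset_sum _ (fun i _ => ?_)
  have h2 : (fun y : ℤ → A => H y (lp.single 2 i (v i)))
      = fun y => ∑ k ∈ S,
      ((blockEval r (b k) y (i - (k : ℤ)) * v i) • lp.single 2 (i - (k : ℤ)) (1 : ℂ)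
        + (conj (blockEval r (b k) y i) * v i) • lp.single 2 (i + (k : ℤ)) (1 : ℂ)) := by
    funext y; exact H_single r S b H hS hH y i (v i)
  rw [h2]
  refine continuous_finset_sum _ (fun k _ => Continuous.add ?_ ?_)
  · exact (((cont_blockEval r b hb k (i - (k : ℤ)))).mul continuous_const).smul
      continuous_const
  · exact (((cont_blockEval r b hb k i).star).mul continuous_const).smul continuous_const

omit hS hH hb

/-- A self-adjoint bounded-below operator on `ℓ²(ℤ)` is invertible. -/
lemma isUnit_of_bddBelow (T : ℓ2Z →L[ℂ] ℓ2Z) (hT : IsSelfAdjoint T) (c : ℝ)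
    (hc : 0 < c) (h : ∀ ψ, c * ‖ψ‖ ≤ ‖T ψ‖) : IsUnit T := by
  rw [ContinuousLinearMap.isUnit_iff_bijective]
  have hinj : Function.Injective T := by
    intro ψ φ hψφ
    have h0 : T (ψ - φ) = 0 := by rw [map_sub, hψφ, sub_self]
    have := h (ψ - φ)
    rw [h0, norm_zero] at this
    have : ‖ψ - φ‖ ≤ 0 := by
      nlinarith [norm_nonneg (ψ - φ)]
    have : ψ - φ = 0 := by
      rw [← norm_le_zero_iff]
      exact this
    exact sub_eq_zero.mp this
  refine ⟨hinj, ?_⟩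
  -- surjectivity
  have hanti : AntilipschitzWith (⟨c, hc.le⟩ : ℝ≥0)⁻¹ T := by
    refine ContinuousLinearMap.antilipschitz_of_bound T (fun ψ => ?_)
    have hgoal : ‖ψ‖ ≤ c⁻¹ * ‖T ψ‖ := by
      rw [le_inv_mul_iff₀ hc]; exact h ψ
    have e : (((⟨c, hc.le⟩ : ℝ≥0)⁻¹ : ℝ≥0) : ℝ) = c⁻¹ := NNReal.coe_inv _
    rw [e]; exact hgoal
  have hclosed : IsClosed (Set.range T) := hanti.isClosed_range T.uniformContinuous
  have hrange : (LinearMap.range (T : ℓ2Z →ₗ[ℂ] ℓ2Z) : Submodule ℂ ℓ2Z) = ⊤ := by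
    have hcl : IsClosed ((LinearMap.range (T : ℓ2Z →ₗ[ℂ] ℓ2Z) : Submodule ℂ ℓ2Z) : Set ℓ2Z) := by
      have : ((LinearMap.range (T : ℓ2Z →ₗ[ℂ] ℓ2Z) : Submodule ℂ ℓ2Z) : Set ℓ2Z) = Set.range T := by
        ext v; simp [LinearMap.mem_range]
      rw [this]; exact hclosed
    haveI : CompleteSpace (LinearMap.range (T : ℓ2Z →ₗ[ℂ] ℓ2Z) : Submodule ℂ ℓ2Z) :=
      hcl.completeSpace_coe
    rw [← Submodule.orthogonal_eq_bot_iff]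
    rw [Submodule.eq_bot_iff]
    intro v hv
    have hTv : T v = 0 := by
      have h1 : ∀ ψ : ℓ2Z, ⟪T ψ, v⟫ = 0 := by
        intro ψ
        exact (Submodule.mem_orthogonal _ v).mp hv (T ψ) (LinearMap.mem_range_self _ ψ)
      have h2 : ⟪T v, T v⟫ = 0 := by
        have h3 : ⟪T (T v), v⟫ = 0 := h1 (T v)
        have h4 : ⟪T (T v), v⟫ = ⟪T v, T v⟫ := by
          have := hT
          rw [ContinuousLinearMap.isSelfAdjoint_iff_isSymmetric] at this
          exact this (T v) v
        rw [← h4, h3]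
      exact inner_self_eq_zero.mp h2
    have := h v
    rw [hTv, norm_zero] at this
    have h5 : ‖v‖ ≤ 0 := by nlinarith [norm_nonneg v]
    rw [← norm_le_zero_iff]
    exact h5
  intro w
  have : w ∈ (LinearMap.range (T : ℓ2Z →ₗ[ℂ] ℓ2Z) : Submodule ℂ ℓ2Z) := by rw [hrange]; trivial
  exact LinearMap.mem_range.mp this

include hS hH

/-- bounded-belowness passes to orbit closures. -/
lemma bddBelow_limit (lam : ℂ) (x x' : ℤ → A)
    (hcl : x' ∈ closure (Set.range fun m : ℤ => shiftBy m x)) (c : ℝ) (hc : 0 < c)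
    (hlow : ∀ (m : ℤ) (ψ : ℓ2Z),
      c * ‖ψ‖ ≤ ‖(algebraMap ℂ (ℓ2Z →L[ℂ] ℓ2Z) lam - H (shiftBy m x)) ψ‖)
    (hb : ∀ k, Continuous (b k)) :
    ∀ ψ : ℓ2Z, c * ‖ψ‖ ≤ ‖(algebraMap ℂ (ℓ2Z →L[ℂ] ℓ2Z) lam - H x') ψ‖ := by
  intro ψ
  set T' : ℓ2Z →L[ℂ] ℓ2Z := algebraMap ℂ (ℓ2Z →L[ℂ] ℓ2Z) lam - H x' with hT'
  set K : ℝ := c + 1 + ‖T'‖ with hK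
  have hK0 : 0 < K := by
    have := norm_nonneg T'
    positivity
  refine le_of_forall_pos_le_add (fun ε hε => ?_)
  set δ : ℝ := ε / K with hδ
  have hδ0 : 0 < δ := div_pos hε hK0
  -- step A: finite approximation
  have hψ : HasSum (fun i : ℤ => lp.single 2 i (ψ i)) ψ :=
    lp.hasSum_single (by norm_num) ψ
  have hex : ∃ F : Finset ℤ, ‖(∑ i ∈ F, lp.single 2 i (ψ i)) - ψ‖ < δ := by
    have ht : Filter.Tendsto (fun F : Finset ℤ => ∑ i ∈ F, lp.single 2 i (ψ i))
        Filter.atTop (nhds ψ) := hψ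
    have h2 := (Metric.tendsto_nhds.mp ht δ hδ0).exists
    obtain ⟨F, hF⟩ := h2
    exact ⟨F, by rwa [dist_eq_norm] at hF⟩
  obtain ⟨F, hF⟩ := hex
  set φ : ℓ2Z := ∑ i ∈ F, lp.single 2 i (ψ i) with hφ
  -- step B: find a shift close to x' on the relevant window
  set U : Set (ℤ → A) := {y | ‖H y φ - H x' φ‖ < δ} with hU
  have hUopen : IsOpen U := by
    have hcont : Continuous (fun y : ℤ → A => ‖H y φ - H x' φ‖) := by
      exact ((cont_H_apply r S b H hS hH hb F (fun i => ψ i)).sub continuous_const).norm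
    exact isOpen_lt hcont continuous_const
  have hx'U : x' ∈ U := by
    simp only [hU, Set.mem_setOf_eq, sub_self, norm_zero]
    exact hδ0
  obtain ⟨y, hyU, hyOrb⟩ := _root_.mem_closure_iff.mp hcl U hUopen hx'U
  obtain ⟨m, rfl⟩ := hyOrb
  -- step C: chain of inequalities
  set Tm : ℓ2Z →L[ℂ] ℓ2Z := algebraMap ℂ (ℓ2Z →L[ℂ] ℓ2Z) lam - H (shiftBy m x) with hTm
  have hdiff : ∀ χ : ℓ2Z, Tm χ = T' χ + (H x' χ - H (shiftBy m x) χ) := by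
    intro χ
    simp only [hTm, hT', ContinuousLinearMap.sub_apply]
    abel
  have hψφ : ‖ψ - φ‖ < δ := by
    rw [← norm_neg]
    simpa [neg_sub] using hF
  have step1 : c * ‖ψ‖ ≤ c * ‖φ‖ + c * δ := by
    have : ‖ψ‖ ≤ ‖φ‖ + δ := by
      calc ‖ψ‖ = ‖φ + (ψ - φ)‖ := by congr 1; abel
        _ ≤ ‖φ‖ + ‖ψ - φ‖ := norm_add_le _ _
        _ ≤ ‖φ‖ + δ := by linarith
    nlinarith
  have step2 : c * ‖φ‖ ≤ ‖Tm φ‖ := hlow m φ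
  have step3 : ‖Tm φ‖ ≤ ‖T' φ‖ + δ := by
    rw [hdiff φ]
    calc ‖T' φ + (H x' φ - H (shiftBy m x) φ)‖
        ≤ ‖T' φ‖ + ‖H x' φ - H (shiftBy m x) φ‖ := norm_add_le _ _
      _ ≤ ‖T' φ‖ + δ := by
          have : ‖H (shiftBy m x) φ - H x' φ‖ < δ := hyU
          rw [← norm_neg (H x' φ - H (shiftBy m x) φ)]
          simp only [neg_sub]
          linarith
  have step4 : ‖T' φ‖ ≤ ‖T' ψ‖ + ‖T'‖ * δ := by
    calc ‖T' φ‖ = ‖T' ψ + T' (φ - ψ)‖ := by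
          congr 1; rw [← map_add]; congr 1; abel
      _ ≤ ‖T' ψ‖ + ‖T' (φ - ψ)‖ := norm_add_le _ _
      _ ≤ ‖T' ψ‖ + ‖T'‖ * ‖φ - ψ‖ := by
          have := T'.le_opNorm (φ - ψ)
          linarith
      _ ≤ ‖T' ψ‖ + ‖T'‖ * δ := by
          have h1 : ‖φ - ψ‖ ≤ δ := by
            rw [← norm_neg]; simp only [neg_sub]; linarith
          have h2 := norm_nonneg T'
          nlinarith
  have hKδ : K * δ = ε := by
    rw [hδ]; field_simp [hK0.ne']
  calc c * ‖ψ‖ ≤ c * ‖φ‖ + c * δ := step1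
    _ ≤ ‖Tm φ‖ + c * δ := by linarith
    _ ≤ ‖T' φ‖ + δ + c * δ := by linarith
    _ ≤ ‖T' ψ‖ + ‖T'‖ * δ + δ + c * δ := by linarith
    _ = ‖T' ψ‖ + K * δ := by rw [hK]; ring
    _ = ‖T' ψ‖ + ε := by rw [hKδ]

end Main

end SpecAux

open SpecAux

/-- For a strongly pattern equivariant family of Schrödinger operators: if `x'`
belongs to the closure of the shift orbit of `x`, then `spec(H_{x'}) ⊆ spec(H_x)`;
consequently on a minimal closed shift-invariant subshift `X` (all orbits of points of
`X` are dense in `X`) the spectrum is constant. -/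
theorem spe_family_spectrum_orbit_closure {A : Set ℝ} (hA : IsCompact A)
    (r : ℕ) (S : Finset ℕ) (hS : ∀ k ∈ S, 0 < k)
    (b : ℕ → (Fin (2 * r + 1) → A) → ℂ) (hb : ∀ k, Continuous (b k))
    (H : (ℤ → A) → (ℓ2Z →L[ℂ] ℓ2Z))
    (hH : ∀ (x : ℤ → A) (ψ : ℓ2Z) (n : ℤ),
      (H x ψ) n = ∑ k ∈ S, (blockEval r (b k) x n * ψ (n + k)
        + conj (blockEval r (b k) x (n - k)) * ψ (n - k))) :
    (∀ x x' : ℤ → A, x' ∈ closure (Set.range fun m : ℤ => shiftBy m x) →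
      spectrum ℂ (H x') ⊆ spectrum ℂ (H x)) ∧
    (∀ X : Set (ℤ → A), IsClosed X → (∀ x ∈ X, shiftBy 1 x ∈ X) →
      (∀ x ∈ X, ∀ y ∈ X, y ∈ closure (Set.range fun m : ℤ => shiftBy m x)) →
      ∀ x ∈ X, ∀ y ∈ X, spectrum ℂ (H x) = spectrum ℂ (H y)) := by
  have part1 : ∀ x x' : ℤ → A, x' ∈ closure (Set.range fun m : ℤ => shiftBy m x) →
      spectrum ℂ (H x') ⊆ spectrum ℂ (H x) := by
    intro x x' hcl lam hlam
    by_contra hn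
    -- λ is real, since H x' is self-adjoint
    have hsa' : IsSelfAdjoint (H x') := H_selfAdjoint r S b H hS hH x'
    have hlamre : lam = (lam.re : ℂ) := hsa'.mem_spectrum_eq_re hlam
    -- from invertibility of `algebraMap λ - H x`, get a lower bound
    have hunit : IsUnit (algebraMap ℂ (ℓ2Z →L[ℂ] ℓ2Z) lam - H x) :=
      spectrum.notMem_iff.mp hn
    obtain ⟨u, hu⟩ := hunit
    have hM : (0 : ℝ) < ‖(↑u⁻¹ : ℓ2Z →L[ℂ] ℓ2Z)‖ := by
      by_contra hM0
      push_neg at hM0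
      have h0 : (↑u⁻¹ : ℓ2Z →L[ℂ] ℓ2Z) = 0 := by
        rw [← norm_le_zero_iff]; exact hM0
      have h1 : (↑(u * u⁻¹) : ℓ2Z →L[ℂ] ℓ2Z) = (1 : ℓ2Z →L[ℂ] ℓ2Z) := by
        rw [mul_inv_cancel]; rfl
      rw [Units.val_mul, h0, mul_zero] at h1
      have h2 : (1 : ℓ2Z →L[ℂ] ℓ2Z) (lp.single 2 (0 : ℤ) (1 : ℂ)) = lp.single 2 (0 : ℤ) 1 :=
        rfl
      rw [← h1] at h2
      have h3 : (lp.single 2 (0 : ℤ) (1 : ℂ) : ℓ2Z) = 0 := by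
        rw [← h2]; rfl
      have h4 : (lp.single 2 (0 : ℤ) (1 : ℂ) : ℓ2Z) 0 = (1 : ℂ) :=
        lp.single_apply_self _ _ _
      rw [h3] at h4
      simp at h4
    set c : ℝ := ‖(↑u⁻¹ : ℓ2Z →L[ℂ] ℓ2Z)‖⁻¹ with hc
    have hc0 : 0 < c := inv_pos.mpr hM
    have hlow0 : ∀ ψ : ℓ2Z, c * ‖ψ‖ ≤ ‖(algebraMap ℂ (ℓ2Z →L[ℂ] ℓ2Z) lam - H x) ψ‖ := by
      intro ψ
      have h0 : ((↑u⁻¹ : ℓ2Z →L[ℂ] ℓ2Z) * ↑u) ψ = (1 : ℓ2Z →L[ℂ] ℓ2Z) ψ := by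
        rw [← Units.val_mul, inv_mul_cancel, Units.val_one]
      have h1 : (↑u⁻¹ : ℓ2Z →L[ℂ] ℓ2Z) ((↑u : ℓ2Z →L[ℂ] ℓ2Z) ψ) = ψ := by
        rw [← ContinuousLinearMap.mul_apply, h0, ContinuousLinearMap.one_apply]
      have h2 : ‖ψ‖ ≤ ‖(↑u⁻¹ : ℓ2Z →L[ℂ] ℓ2Z)‖ * ‖(↑u : ℓ2Z →L[ℂ] ℓ2Z) ψ‖ := by
        conv_lhs => rw [← h1]
        exact (↑u⁻¹ : ℓ2Z →L[ℂ] ℓ2Z).le_opNorm _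
      rw [hu] at h2
      rw [hc, inv_mul_le_iff₀ hM]
      exact h2
    -- lower bound for all shifted operators
    have hlow : ∀ (m : ℤ) (ψ : ℓ2Z),
        c * ‖ψ‖ ≤ ‖(algebraMap ℂ (ℓ2Z →L[ℂ] ℓ2Z) lam - H (shiftBy m x)) ψ‖ := by
      intro m ψ
      have hcov := Hcov r S b H hS hH m x ψ
      have h1 : (algebraMap ℂ (ℓ2Z →L[ℂ] ℓ2Z) lam - H (shiftBy m x)) ψ
          = shiftL m ((algebraMap ℂ (ℓ2Z →L[ℂ] ℓ2Z) lam - H x) ((shiftL m).symm ψ)) := by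
        simp only [ContinuousLinearMap.sub_apply, map_sub]
        rw [hcov]
        congr 1
        · have e1 : ∀ (χ : ℓ2Z), (algebraMap ℂ (ℓ2Z →L[ℂ] ℓ2Z) lam) χ = lam • χ := by
            intro χ
            rw [Algebra.algebraMap_eq_smul_one]
            simp
          rw [e1, e1, map_smul, LinearIsometryEquiv.apply_symm_apply]
      rw [h1, LinearIsometryEquiv.norm_map]
      calc c * ‖ψ‖ = c * ‖(shiftL m).symm ψ‖ := by rw [LinearIsometryEquiv.norm_map]
        _ ≤ _ := hlow0 _
    -- pass to the limit
    have hlow' := bddBelow_limit r S b H hS hH lam x x' hcl c hc0 hlow hb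
    -- `algebraMap λ - H x'` is self-adjoint since λ is real
    have hsaT : IsSelfAdjoint (algebraMap ℂ (ℓ2Z →L[ℂ] ℓ2Z) lam - H x') := by
      have hstar : star lam = lam := by
        rw [Complex.star_def]
        conv_lhs => rw [hlamre]
        rw [Complex.conj_ofReal]
        exact hlamre.symm
      have h1 : IsSelfAdjoint (algebraMap ℂ (ℓ2Z →L[ℂ] ℓ2Z) lam) := by
        rw [IsSelfAdjoint, ← algebraMap_star_comm, hstar]
      exact h1.sub hsa'
    have hunit' : IsUnit (algebraMap ℂ (ℓ2Z →L[ℂ] ℓ2Z) lam - H x') :=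
      isUnit_of_bddBelow _ hsaT c hc0 hlow'
    exact (spectrum.mem_iff.mp hlam) hunit'
  refine ⟨part1, ?_⟩
  intro X _ _ hmin x hx y hy
  exact Set.Subset.antisymm (part1 y x (hmin y hy x hx)) (part1 x y (hmin x hx y hy))

end
end

section
/- Let H be a bounded self-adjoint operator on a Hilbert space, Δ ⊂ ℝ a closed interval disjoint from spec(H), and H' a self-adjoint finite rank perturbation of H of rank k. Then spec(H') ∩ Δ consists of at most k eigenvalues counted with multiplicity. -/
open scoped ENNReal

lemma fredholm_finrank_surjective {E : Type*} [AddCommGroup E] [Module ℂ E]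
    (f : E →ₗ[ℂ] E) (hfin : FiniteDimensional ℂ (LinearMap.range f))
    (hinj : Function.Injective (LinearMap.id (R := ℂ) (M := E) + f)) :
    Function.Surjective (LinearMap.id (R := ℂ) (M := E) + f) := by
  set R := LinearMap.range f with hR
  have hmaps : ∀ x ∈ R, (LinearMap.id (R := ℂ) (M := E) + f) x ∈ R := by
    intro x hx
    simpa using add_mem hx (LinearMap.mem_range_self f x)
  set g : R →ₗ[ℂ] R := (LinearMap.id (R := ℂ) (M := E) + f).restrict hmaps with hg
  have hginj : Function.Injective g := by
    intro a b hab
    have := congrArg Subtype.val hab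
    simp only [hg, LinearMap.restrict_apply] at this
    exact Subtype.ext (hinj this)
  have hgsurj : Function.Surjective g := LinearMap.surjective_of_injective hginj
  intro y
  obtain ⟨r, hr⟩ := hgsurj ⟨f y, LinearMap.mem_range_self f y⟩
  have hr' : (r : E) + f r = f y := congrArg Subtype.val hr
  refine ⟨y - r, ?_⟩
  simp only [LinearMap.add_apply, LinearMap.id_apply, map_sub]
  abel_nf
  linear_combination (norm := abel) -hr'

lemma hasEigenvalue_of_mem_spectrum_gap {E : Type*} [NormedAddCommGroup E]
    [InnerProductSpace ℂ E] [CompleteSpace E] (H H' : E →L[ℂ] E)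
    (hfin : FiniteDimensional ℂ (LinearMap.range ((H' - H : E →L[ℂ] E) : E →ₗ[ℂ] E)))
    (μ : ℂ) (hμH : IsUnit (algebraMap ℂ (E →L[ℂ] E) μ - H))
    (hspec : μ ∈ spectrum ℂ H') :
    Module.End.HasEigenvalue (H' : E →ₗ[ℂ] E) μ := by
  by_contra hne
  have hbot : Module.End.eigenspace (H' : E →ₗ[ℂ] E) μ = ⊥ := not_not.mp hne
  set u := hμH.unit with hu'
  have huval : (u : E →L[ℂ] E) = algebraMap ℂ (E →L[ℂ] E) μ - H := rfl
  set B : E →L[ℂ] E := ↑u⁻¹ with hB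
  set V : E →L[ℂ] E := H' - H with hV
  set F : E →L[ℂ] E := -(B * V) with hF
  set G : E →L[ℂ] E := 1 + F with hG
  have hGeq : (u : E →L[ℂ] E) * G = algebraMap ℂ (E →L[ℂ] E) μ - H' := by
    rw [hG, hF, mul_add, mul_one, mul_neg, ← mul_assoc]
    rw [u.mul_inv]  -- maybe name is different
    rw [one_mul, huval, hV]
    abel
  -- range of F is finite dimensional
  have hfinF : FiniteDimensional ℂ (LinearMap.range (F : E →ₗ[ℂ] E)) := by
    have h1 : LinearMap.range (F : E →ₗ[ℂ] E) =
        Submodule.map (B : E →ₗ[ℂ] E) (LinearMap.range (V : E →ₗ[ℂ] E)) := by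
      rw [hF]
      push_cast
      rw [LinearMap.range_neg]
      exact LinearMap.range_comp _ _
    rw [h1]
    have : FiniteDimensional ℂ (LinearMap.range (V : E →ₗ[ℂ] E)) := hfin
    exact Module.Finite.map _ _
  -- injectivity of 1 + F
  have happ : ∀ x : E, G x = x + F x := fun x => rfl
  have hker : ∀ x : E, G x = 0 → x = 0 := by
    intro x hx
    have h2 : (algebraMap ℂ (E →L[ℂ] E) μ - H') x = 0 := by
      rw [← hGeq]
      show (u : E →L[ℂ] E) (G x) = 0
      rw [hx, map_zero]
    have h3 : (H' : E →ₗ[ℂ] E) x = μ • x := by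
      have : μ • x - H' x = 0 := by
        simpa [Algebra.algebraMap_eq_smul_one, ContinuousLinearMap.sub_apply] using h2
      have := sub_eq_zero.mp this
      exact this.symm
    have : x ∈ Module.End.eigenspace (H' : E →ₗ[ℂ] E) μ :=
      Module.End.mem_eigenspace_iff.mpr h3
    rwa [hbot, Submodule.mem_bot] at this
  have hinj : Function.Injective (LinearMap.id (R := ℂ) (M := E) + (F : E →ₗ[ℂ] E)) := by
    intro a b hab
    have h4 : G (a - b) = 0 := by
      have : G a = G b := by
        simpa [happ] using hab
      rw [map_sub, this, sub_self]
    have := hker _ h4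
    exact sub_eq_zero.mp this
  have hsurj := fredholm_finrank_surjective (F : E →ₗ[ℂ] E) hfinF hinj
  -- G is bijective, hence a unit
  have hkerG : LinearMap.ker (G : E →ₗ[ℂ] E) = ⊥ := by
    refine (Submodule.eq_bot_iff _).mpr fun x hx => ?_
    exact hker x (LinearMap.mem_ker.mp hx)
  have hrangeG : LinearMap.range (G : E →ₗ[ℂ] E) = ⊤ := by
    rw [LinearMap.range_eq_top]
    intro y
    obtain ⟨x, hx⟩ := hsurj y
    exact ⟨x, by simpa [happ] using hx⟩
  let e : E ≃L[ℂ] E := ContinuousLinearEquiv.ofBijective G hkerG hrangeG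
  have hGunit : IsUnit G := by
    refine ⟨(ContinuousLinearEquiv.unitsEquiv ℂ E).symm e, ?_⟩
    have : ((ContinuousLinearEquiv.unitsEquiv ℂ E).symm e : E →L[ℂ] E) = ↑e := rfl
    rw [this]
    exact ContinuousLinearEquiv.coe_ofBijective G hkerG hrangeG
  have : IsUnit (algebraMap ℂ (E →L[ℂ] E) μ - H') := by
    rw [← hGeq]
    exact u.isUnit.mul hGunit
  exact (spectrum.mem_iff.mp hspec) this


open scoped ENNReal

lemma norm_lower_bound_of_dist_spectrum {E : Type*} [NormedAddCommGroup E]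
    [InnerProductSpace ℂ E] [CompleteSpace E]
    (A : E →L[ℂ] E) (hA : IsSelfAdjoint A) (ν : ℝ) {d : ℝ} (hd : 0 < d)
    (h : ∀ w ∈ spectrum ℂ A, d ≤ ‖(ν : ℂ) - w‖) (x : E) :
    d * ‖x‖ ≤ ‖(ν : ℂ) • x - A x‖ := by
  have hnot : (ν : ℂ) ∉ spectrum ℂ A := by
    intro hmem
    have := h _ hmem
    simp at this
    linarith
  have hu : IsUnit (algebraMap ℂ (E →L[ℂ] E) (ν : ℂ) - A) := spectrum.notMem_iff.mp hnot
  set u := hu.unit with hu'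
  have huval : (u : E →L[ℂ] E) = algebraMap ℂ (E →L[ℂ] E) (ν : ℂ) - A := rfl
  set B : E →L[ℂ] E := ↑u⁻¹ with hB
  -- B is self-adjoint
  have hUsa : IsSelfAdjoint (u : E →L[ℂ] E) := by
    rw [huval]
    refine IsSelfAdjoint.sub ?_ hA
    rw [IsSelfAdjoint, ← algebraMap_star_comm]
    simp
  have hBsa : IsSelfAdjoint B := by
    have h1 : B * (u : E →L[ℂ] E) = 1 := u.inv_mul
    have h2 : (u : E →L[ℂ] E) * star B = 1 := by
      have := congrArg star h1
      rw [star_mul, star_one] at this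
      rwa [hUsa.star_eq] at this
    exact (left_inv_eq_right_inv h1 h2).symm
  -- spectral radius bound
  have hD : ∀ z ∈ spectrum ℂ B, ‖z‖₊ ≤ (NNReal.mk d hd.le)⁻¹ := by
    intro z hz
    have hz' : z⁻¹ ∈ spectrum ℂ (u : E →L[ℂ] E) := by
      have := spectrum.map_inv (𝕜 := ℂ) u
      rw [← this] at hz
      exact Set.mem_inv.mp hz
    obtain ⟨w, hw, hwz⟩ : ∃ w ∈ spectrum ℂ A, (ν : ℂ) - w = z⁻¹ := by
      rw [huval, ← spectrum.singleton_sub_eq] at hz'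
      obtain ⟨a, ha, b, hb, hab⟩ := hz'
      exact ⟨b, hb, by simpa [Set.mem_singleton_iff.mp ha] using hab⟩
    have hd1 : d ≤ ‖z⁻¹‖ := hwz ▸ h w hw
    have hz0 : z ≠ 0 := by
      intro h0
      rw [h0] at hd1
      simp at hd1
      linarith
    rw [← NNReal.coe_le_coe]
    rw [norm_inv] at hd1
    push_cast
    rw [← inv_inv ‖z‖]
    exact inv_anti₀ hd (by simpa using hd1)
  have hrad : spectralRadius ℂ B ≤ (((NNReal.mk d hd.le)⁻¹ : NNReal) : ℝ≥0∞) := by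
    rw [spectralRadius]
    exact iSup₂_le fun z hz => by exact_mod_cast ENNReal.coe_le_coe.mpr (hD z hz)
  have hBnorm : ‖B‖ ≤ d⁻¹ := by
    have := hBsa.spectralRadius_eq_nnnorm
    rw [this] at hrad
    have := ENNReal.coe_le_coe.mp hrad
    calc ‖B‖ = (‖B‖₊ : ℝ) := rfl
    _ ≤ ((NNReal.mk d hd.le)⁻¹ : NNReal) := by exact_mod_cast this
    _ = d⁻¹ := by simp
  -- conclude
  have hx : x = B ((u : E →L[ℂ] E) x) := by
    have : (B * (u : E →L[ℂ] E)) x = x := by rw [u.inv_mul]; rfl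
    simpa using this.symm
  have hux : (u : E →L[ℂ] E) x = (ν : ℂ) • x - A x := by
    rw [huval]
    simp [Algebra.algebraMap_eq_smul_one, ContinuousLinearMap.sub_apply]
  calc d * ‖x‖ = d * ‖B ((u : E →L[ℂ] E) x)‖ := by rw [← hx]
  _ ≤ d * (‖B‖ * ‖(u : E →L[ℂ] E) x‖) := by
      gcongr
      exact B.le_opNorm _
  _ ≤ d * (d⁻¹ * ‖(u : E →L[ℂ] E) x‖) := by gcongr
  _ = ‖(u : E →L[ℂ] E) x‖ := by field_simp
  _ = ‖(ν : ℂ) • x - A x‖ := by rw [hux]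


lemma key_zero_of_mem_gap_eigenspaces {E : Type*} [NormedAddCommGroup E]
    [InnerProductSpace ℂ E] [CompleteSpace E]
    (H H' : E →L[ℂ] E) (hH : IsSelfAdjoint H) (hH' : IsSelfAdjoint H')
    (E₀ E₁ : ℝ) (hE : E₀ ≤ E₁) {d : ℝ} (hdr : (E₁ - E₀) / 2 < d)
    (hd : ∀ w ∈ spectrum ℂ H, d ≤ ‖(((E₀ + E₁) / 2 : ℝ) : ℂ) - w‖)
    (x : E) (hx : x ∈ ⨆ μ ∈ Set.Icc E₀ E₁, Module.End.eigenspace (H' : E →ₗ[ℂ] E) (μ : ℂ))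
    (hVx : (H' - H) x = 0) : x = 0 := by
  classical
  set ν : ℝ := (E₀ + E₁) / 2 with hν
  set r : ℝ := (E₁ - E₀) / 2 with hr
  have hr0 : 0 ≤ r := by rw [hr]; linarith
  have hd0 : 0 < d := lt_of_le_of_lt hr0 hdr
  set Hl : E →ₗ[ℂ] E := (H' : E →ₗ[ℂ] E) with hHl
  obtain ⟨f, hf, hsum⟩ := (Submodule.mem_iSup_iff_exists_finsupp
    (fun μ : ℝ => ⨆ _ : μ ∈ Set.Icc E₀ E₁, Module.End.eigenspace Hl (μ : ℂ)) x).mp hx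
  have hmem : ∀ μ : ℝ, f μ ∈ Module.End.eigenspace Hl (μ : ℂ) := by
    intro μ
    by_cases hμ : μ ∈ Set.Icc E₀ E₁
    · have := hf μ; rwa [iSup_pos hμ] at this
    · have := hf μ; rw [iSup_neg hμ] at this
      simp only [Submodule.mem_bot] at this
      rw [this]; exact zero_mem _
  have hsupp : ∀ μ ∈ f.support, μ ∈ Set.Icc E₀ E₁ := by
    intro μ hμ
    by_contra hc
    have := hf μ; rw [iSup_neg hc] at this
    simp only [Submodule.mem_bot] at this
    exact (Finsupp.mem_support_iff.mp hμ) this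
  have hxsum : x = ∑ μ ∈ f.support, f μ := by
    rw [← hsum]; rfl
  -- orthogonal family over real indices
  have OF : OrthogonalFamily ℂ (fun μ : ℝ => Module.End.eigenspace Hl (μ : ℂ))
      (fun μ : ℝ => (Module.End.eigenspace Hl (μ : ℂ)).subtypeₗᵢ) :=
    (hH'.isSymmetric.orthogonalFamily_eigenspaces).comp Complex.ofReal_injective
  set l : ∀ μ : ℝ, Module.End.eigenspace Hl (μ : ℂ) := fun μ => ⟨f μ, hmem μ⟩ with hl
  have hnx : ‖x‖ ^ 2 = ∑ μ ∈ f.support, ‖f μ‖ ^ 2 := by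
    have := OF.norm_sum l f.support
    simpa [hxsum, hl] using this
  set y : E := (ν : ℂ) • x - H' x with hy
  have hyeq : y = ∑ μ ∈ f.support, ((ν : ℂ) - (μ : ℂ)) • f μ := by
    have hH'x : H' x = ∑ μ ∈ f.support, (μ : ℂ) • f μ := by
      rw [hxsum, map_sum]
      refine Finset.sum_congr rfl fun μ _ => ?_
      exact Module.End.mem_eigenspace_iff.mp (hmem μ)
    rw [hy, hH'x, hxsum, Finset.smul_sum, ← Finset.sum_sub_distrib]
    refine Finset.sum_congr rfl fun μ _ => ?_
    rw [sub_smul]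
  set l' : ∀ μ : ℝ, Module.End.eigenspace Hl (μ : ℂ) :=
    fun μ => ((ν : ℂ) - (μ : ℂ)) • l μ with hl'
  have hny : ‖y‖ ^ 2 = ∑ μ ∈ f.support, ‖((ν : ℂ) - (μ : ℂ)) • f μ‖ ^ 2 := by
    have := OF.norm_sum l' f.support
    simpa [hyeq, hl', hl] using this
  have hupper : ‖y‖ ^ 2 ≤ r ^ 2 * ‖x‖ ^ 2 := by
    rw [hny, hnx, Finset.mul_sum]
    refine Finset.sum_le_sum fun μ hμ => ?_
    obtain ⟨h1, h2⟩ := hsupp μ hμ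
    have hcast : ((ν : ℂ) - (μ : ℂ)) = ((ν - μ : ℝ) : ℂ) := by push_cast; ring
    have habs : ‖(ν : ℂ) - (μ : ℂ)‖ ≤ r := by
      rw [hcast, Complex.norm_real, Real.norm_eq_abs, abs_le, hν, hr]
      constructor <;> linarith
    rw [norm_smul, mul_pow]
    have h0 : (0:ℝ) ≤ ‖(ν : ℂ) - (μ : ℂ)‖ := norm_nonneg _
    exact mul_le_mul_of_nonneg_right (pow_le_pow_left₀ h0 habs 2) (sq_nonneg _)
  have hHx : H' x = H x := by
    have h0 : H' x - H x = 0 := by simpa [ContinuousLinearMap.sub_apply] using hVx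
    exact sub_eq_zero.mp h0
  have hlow : d * ‖x‖ ≤ ‖y‖ := by
    rw [hy, hHx]
    exact norm_lower_bound_of_dist_spectrum H hH ν hd0 (by rw [hν]; exact hd) x
  have hlow2 : (d * ‖x‖) ^ 2 ≤ ‖y‖ ^ 2 := by
    have h1 : 0 ≤ d * ‖x‖ := mul_nonneg hd0.le (norm_nonneg x)
    nlinarith [norm_nonneg y]
  have e1 : d ^ 2 * ‖x‖ ^ 2 ≤ r ^ 2 * ‖x‖ ^ 2 := by
    calc d ^ 2 * ‖x‖ ^ 2 = (d * ‖x‖) ^ 2 := (mul_pow d ‖x‖ 2).symm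
    _ ≤ ‖y‖ ^ 2 := hlow2
    _ ≤ r ^ 2 * ‖x‖ ^ 2 := hupper
  have hd2 : r ^ 2 < d ^ 2 := by nlinarith
  rw [← norm_eq_zero]
  by_contra hne
  have hpos : 0 < ‖x‖ := lt_of_le_of_ne (norm_nonneg x) (Ne.symm hne)
  have hxx : 0 < ‖x‖ ^ 2 := by positivity
  nlinarith [e1, hd2, hxx]


/-- Let `H` be a bounded self-adjoint operator on a Hilbert space, `Δ = [E₀, E₁]` a
closed interval disjoint from `spec(H)`, and `H'` a self-adjoint perturbation of `H` of
finite rank `k`.  Then the spectrum of `H'` in `Δ` consists of eigenvalues, at most `k`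
of them counted with multiplicity. -/
theorem finite_rank_perturbation_eigenvalues_in_gap
    {E : Type*} [NormedAddCommGroup E] [InnerProductSpace ℂ E] [CompleteSpace E]
    (H H' : E →L[ℂ] E) (hH : IsSelfAdjoint H) (hH' : IsSelfAdjoint H')
    (k : ℕ)
    (hfin : FiniteDimensional ℂ (LinearMap.range ((H' - H : E →L[ℂ] E) : E →ₗ[ℂ] E)))
    (hrank : Module.finrank ℂ (LinearMap.range ((H' - H : E →L[ℂ] E) : E →ₗ[ℂ] E)) = k)
    (E₀ E₁ : ℝ) (hE : E₀ ≤ E₁)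
    (hgap : ∀ μ ∈ Set.Icc E₀ E₁, (μ : ℂ) ∉ spectrum ℂ H) :
    (∀ μ ∈ Set.Icc E₀ E₁, (μ : ℂ) ∈ spectrum ℂ H' →
        Module.End.HasEigenvalue (H' : E →ₗ[ℂ] E) (μ : ℂ)) ∧
    FiniteDimensional ℂ
      ↥(⨆ μ ∈ Set.Icc E₀ E₁, Module.End.eigenspace (H' : E →ₗ[ℂ] E) (μ : ℂ)) ∧
    Module.finrank ℂ
      ↥(⨆ μ ∈ Set.Icc E₀ E₁, Module.End.eigenspace (H' : E →ₗ[ℂ] E) (μ : ℂ)) ≤ k := by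
  classical
  have part1 : ∀ μ ∈ Set.Icc E₀ E₁, (μ : ℂ) ∈ spectrum ℂ H' →
      Module.End.HasEigenvalue (H' : E →ₗ[ℂ] E) (μ : ℂ) := fun μ hμ hs =>
    hasEigenvalue_of_mem_spectrum_gap H H' hfin (μ : ℂ)
      (spectrum.notMem_iff.mp (hgap μ hμ)) hs
  -- construct the uniform distance bound
  set ν : ℝ := (E₀ + E₁) / 2 with hν
  set r : ℝ := (E₁ - E₀) / 2 with hr
  have hpt : ∀ w ∈ spectrum ℂ H, r < ‖(ν : ℂ) - w‖ := by
    intro w hw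
    have hwre : w = (w.re : ℂ) := hH.mem_spectrum_eq_re hw
    set t : ℝ := w.re with ht
    have htn : t ∉ Set.Icc E₀ E₁ := by
      intro hc
      exact hgap t hc (by rwa [← hwre])
    have hval : ‖(ν : ℂ) - w‖ = |ν - t| := by
      rw [hwre]
      rw [show (ν : ℂ) - (t : ℂ) = ((ν - t : ℝ) : ℂ) by push_cast; ring]
      rw [Complex.norm_real, Real.norm_eq_abs]
    rw [hval]
    rw [Set.mem_Icc, not_and_or, not_le, not_le] at htn
    rcases htn with h1 | h2
    · have : ν - t > r := by rw [hν, hr]; linarith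
      calc r < ν - t := this
      _ ≤ |ν - t| := le_abs_self _
    · have : t - ν > r := by rw [hν, hr]; linarith
      calc r < t - ν := this
      _ ≤ |ν - t| := by rw [abs_sub_comm]; exact le_abs_self _
  have hcpt : IsCompact (spectrum ℂ H) := spectrum.isCompact H
  have hcont : ContinuousOn (fun w : ℂ => ‖(ν : ℂ) - w‖) (spectrum ℂ H) :=
    ((continuous_const.sub continuous_id).norm).continuousOn
  obtain ⟨d, hdr, hd⟩ := hcpt.exists_forall_le' hcont hpt
  -- the perturbation is injective on the sum of gap eigenspaces
  have key : ∀ x ∈ ⨆ μ ∈ Set.Icc E₀ E₁,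
      Module.End.eigenspace (H' : E →ₗ[ℂ] E) (μ : ℂ), (H' - H) x = 0 → x = 0 := by
    intro x hx h0
    exact key_zero_of_mem_gap_eigenspaces H H' hH hH' E₀ E₁ hE
      (by rw [← hr]; exact hdr) (by rw [← hν]; exact hd) x hx h0
  set W : Submodule ℂ E := ⨆ μ ∈ Set.Icc E₀ E₁,
      Module.End.eigenspace (H' : E →ₗ[ℂ] E) (μ : ℂ) with hW
  let φ : W →ₗ[ℂ] LinearMap.range ((H' - H : E →L[ℂ] E) : E →ₗ[ℂ] E) :=
    LinearMap.codRestrict _ (((H' - H : E →L[ℂ] E) : E →ₗ[ℂ] E).domRestrict W)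
      (fun w => LinearMap.mem_range.mpr ⟨(w : E), rfl⟩)
  have hφinj : Function.Injective φ := by
    intro a b hab
    have h1 : (H' - H) ((a : E) - (b : E)) = 0 := by
      have := congrArg Subtype.val hab
      simp only [φ, LinearMap.codRestrict_apply, LinearMap.domRestrict_apply] at this
      rw [map_sub]
      change (H' - H) (a : E) - (H' - H) (b : E) = 0
      rw [show ((H' - H : E →L[ℂ] E) : E →ₗ[ℂ] E) (a : E)
        = (H' - H) (a : E) from rfl] at this
      rw [show ((H' - H : E →L[ℂ] E) : E →ₗ[ℂ] E) (b : E)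
        = (H' - H) (b : E) from rfl] at this
      rw [this, sub_self]
    have h2 : (a : E) - (b : E) = 0 :=
      key _ (sub_mem a.2 b.2) h1
    exact Subtype.ext (sub_eq_zero.mp h2)
  haveI hWfin : FiniteDimensional ℂ W := FiniteDimensional.of_injective φ hφinj
  refine ⟨part1, hWfin, ?_⟩
  rw [← hrank]
  exact LinearMap.finrank_le_finrank_of_injective hφinj
end
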